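/- Let Fo > 0, θ_r ∈ ℝ, λ₀ > 0 with erfc(λ₀) ≠ 0, and define θ_right(t, x) = θ_r · (1 − erfc(x/(2√(t·Fo)))/erfc(λ₀)) for t > 0 and x ∈ ℝ, where erfc(x) = 1 − erf(x). Then θ_right satisfies the heat equation ∂_t θ_right(t, x) = Fo · ∂_xx θ_right(t, x) at every point (t, x) with t > 0. -/

import Mathlib

/-- The error function `erf x = (2/√π) ∫₀ˣ e^{−s²} ds`. -/
noncomputable def erf (x : ℝ) : ℝ :=
  (2 / Real.sqrt Real.pi) * ∫ s in (0:ℝ)..x, Real.exp (-s ^ 2)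

/-- The complementary error function `erfc = 1 - erf`. -/
noncomputable def erfc (x : ℝ) : ℝ := 1 - erf x

/-- Liquid-phase branch of the exact self-similar Stefan solution. -/
noncomputable def thetaLeft (Fo θl lam0 t x : ℝ) : ℝ :=
  θl * (1 - erf (x / (2 * Real.sqrt (t * Fo))) / erf lam0)

/-- Solid-phase branch of the exact self-similar Stefan solution. -/
noncomputable def thetaRight (Fo θr lam0 t x : ℝ) : ℝ :=
  θr * (1 - erfc (x / (2 * Real.sqrt (t * Fo))) / erfc lam0)

/-- The liquid–solid interface `λ(t) = 2lam0√(t·Fo)`. -/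
noncomputable def interface (Fo lam0 t : ℝ) : ℝ := 2 * lam0 * Real.sqrt (t * Fo)

/-- The exact self-similar solution of the two-phase Stefan problem. -/
noncomputable def thetaEx (Fo θl θr lam0 t x : ℝ) : ℝ :=
  if x ≤ interface Fo lam0 t then thetaLeft Fo θl lam0 t x else thetaRight Fo θr lam0 t x

/-- The solid branch `θ_right` satisfies the heat equation `∂_t θ = Fo ∂_xx θ` for `t > 0`. -/
lemma hasDerivAt_erf (x : ℝ) :
    HasDerivAt erf (2 / Real.sqrt Real.pi * Real.exp (-x ^ 2)) x := by
  have hc : Continuous fun s : ℝ => Real.exp (-s ^ 2) := by continuity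
  have h : HasDerivAt (fun y => ∫ s in (0:ℝ)..y, Real.exp (-s ^ 2)) (Real.exp (-x ^ 2)) x :=
    (intervalIntegral.integral_hasStrictDerivAt_right (hc.intervalIntegrable _ _)
      (hc.stronglyMeasurableAtFilter _ _) hc.continuousAt).hasDerivAt
  exact h.const_mul (2 / Real.sqrt Real.pi)

theorem thetaRight_heat (Fo θr lam0 : ℝ) (hFo : 0 < Fo) (hlam0 : 0 < lam0) (herfc : erfc lam0 ≠ 0) :
    ∀ t : ℝ, 0 < t → ∀ x : ℝ,
      deriv (fun τ => thetaRight Fo θr lam0 τ x) t =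
        Fo * deriv (deriv (fun y => thetaRight Fo θr lam0 t y)) x := by
  intro t ht x
  have herfc' : (1:ℝ) - erf lam0 ≠ 0 := herfc
  set s := Real.sqrt (t * Fo) with hsdef
  have htFo : 0 < t * Fo := mul_pos ht hFo
  have hs : 0 < s := Real.sqrt_pos.mpr htFo
  have hs2 : s ^ 2 = t * Fo := Real.sq_sqrt htFo.le
  have hsne : s ≠ 0 := ne_of_gt hs
  -- rewrite thetaRight as affine in erf
  have hrw : ∀ τ y : ℝ, thetaRight Fo θr lam0 τ y =
      (θr - θr / erfc lam0) + (θr / erfc lam0) * erf (y / (2 * Real.sqrt (τ * Fo))) := by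
    intro τ y
    unfold thetaRight erfc
    field_simp
    ring
  -- spatial first derivative
  have hD1 : deriv (fun y => thetaRight Fo θr lam0 t y) =
      fun y => θr / erfc lam0 * (2 / Real.sqrt Real.pi * Real.exp (-(y / (2 * s)) ^ 2) * (1 / (2 * s))) := by
    funext y
    have hu : HasDerivAt (fun y : ℝ => y / (2 * s)) (1 / (2 * s)) y := by
      simpa using (hasDerivAt_id y).div_const (2 * s)
    have h1 : HasDerivAt (fun y => erf (y / (2 * s)))
        (2 / Real.sqrt Real.pi * Real.exp (-(y / (2 * s)) ^ 2) * (1 / (2 * s))) y :=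
      (hasDerivAt_erf _).comp y hu
    have h2 := (h1.const_mul (θr / erfc lam0)).const_add (θr - θr / erfc lam0)
    have h3 : (fun y => thetaRight Fo θr lam0 t y) =
        fun y => (θr - θr / erfc lam0) + (θr / erfc lam0) * erf (y / (2 * s)) := by
      funext y; rw [hrw, hsdef]
    rw [h3]
    exact h2.deriv
  rw [hD1]
  -- second spatial derivative
  have hinner : HasDerivAt (fun y : ℝ => -(y / (2 * s)) ^ 2)
      (-(2 * (x / (2 * s)) * (1 / (2 * s)))) x := by
    have hu : HasDerivAt (fun y : ℝ => y / (2 * s)) (1 / (2 * s)) x := by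
      simpa using (hasDerivAt_id x).div_const (2 * s)
    simpa [Pi.neg_def, Pi.pow_def] using ((hu.pow 2).neg)
  have hexp : HasDerivAt (fun y : ℝ => Real.exp (-(y / (2 * s)) ^ 2))
      (Real.exp (-(x / (2 * s)) ^ 2) * (-(2 * (x / (2 * s)) * (1 / (2 * s))))) x := by
    simpa [mul_comm] using hinner.exp
  have hD2 : HasDerivAt
      (fun y => θr / erfc lam0 * (2 / Real.sqrt Real.pi * Real.exp (-(y / (2 * s)) ^ 2) * (1 / (2 * s))))
      (θr / erfc lam0 * (2 / Real.sqrt Real.pi *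
        (Real.exp (-(x / (2 * s)) ^ 2) * (-(2 * (x / (2 * s)) * (1 / (2 * s))))) * (1 / (2 * s)))) x := by
    have := (hexp.const_mul (2 / Real.sqrt Real.pi)).mul_const (1 / (2 * s))
    simpa [mul_assoc, mul_comm, mul_left_comm] using this.const_mul (θr / erfc lam0)
  rw [hD2.deriv]
  -- time derivative
  have hsqrt : HasDerivAt (fun τ : ℝ => Real.sqrt (τ * Fo)) (1 / (2 * s) * Fo) t := by
    have hm : HasDerivAt (fun τ : ℝ => τ * Fo) Fo t := hasDerivAt_mul_const Fo
    have := (Real.hasDerivAt_sqrt (ne_of_gt htFo)).comp t hm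
    simpa [hsdef, Function.comp_def] using this
  have hden : HasDerivAt (fun τ : ℝ => 2 * Real.sqrt (τ * Fo)) (2 * (1 / (2 * s) * Fo)) t :=
    hsqrt.const_mul 2
  have hinv : HasDerivAt (fun τ : ℝ => (2 * Real.sqrt (τ * Fo))⁻¹)
      (-(2 * (1 / (2 * s) * Fo)) / (2 * s) ^ 2) t := by
    have := hden.inv (by positivity)
    simpa [hsdef, Pi.inv_def] using this
  have hut : HasDerivAt (fun τ : ℝ => x / (2 * Real.sqrt (τ * Fo)))
      (x * (-(2 * (1 / (2 * s) * Fo)) / (2 * s) ^ 2)) t := by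
    simpa [div_eq_mul_inv] using hinv.const_mul x
  have herf_t : HasDerivAt (fun τ => erf (x / (2 * Real.sqrt (τ * Fo))))
      (2 / Real.sqrt Real.pi * Real.exp (-(x / (2 * s)) ^ 2) *
        (x * (-(2 * (1 / (2 * s) * Fo)) / (2 * s) ^ 2))) t := by
    have := (hasDerivAt_erf (x / (2 * Real.sqrt (t * Fo)))).comp t hut
    simpa [hsdef, Function.comp_def] using this
  have hT : HasDerivAt (fun τ => thetaRight Fo θr lam0 τ x)
      (θr / erfc lam0 * (2 / Real.sqrt Real.pi * Real.exp (-(x / (2 * s)) ^ 2) *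
        (x * (-(2 * (1 / (2 * s) * Fo)) / (2 * s) ^ 2)))) t := by
    have h2 := (herf_t.const_mul (θr / erfc lam0)).const_add (θr - θr / erfc lam0)
    have h3 : (fun τ => thetaRight Fo θr lam0 τ x) =
        fun τ => (θr - θr / erfc lam0) + (θr / erfc lam0) * erf (x / (2 * Real.sqrt (τ * Fo))) := by
      funext τ; rw [hrw]
    rw [h3]; exact h2
  rw [hT.deriv]
  field_simp
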